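/- Let H be a separable complex Hilbert space, let q > p ≥ 1, and let x, y : Fin p × ℤ → H form a pair of dual Riesz bases for H. Let M be a q×p complex matrix with rank M = p, and define z_{(j,n)} = ∑_{k=0}^{p−1} M_{j,k} x_{(k,n)} for j ∈ Fin q, n ∈ ℤ. Then z is a frame for H: there exist constants 0 < A ≤ B such that for every f ∈ H, A·‖f‖² ≤ ∑_{j∈Fin q} ∑_{n∈ℤ} |⟨f, z_{(j,n)}⟩|² ≤ B·‖f‖². -/

import Mathlib

noncomputable section
open scoped Classical ENNReal ComplexOrder

local notation "⟪" f ", " g "⟫" => @inner ℂ _ _ g f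

/-- A family `x : ι → H` is a Riesz basis for `H` if it is the image of a Hilbert
(orthonormal) basis of `H` under a continuous linear equivalence of `H`. -/
def IsRieszBasis {H : Type*} [NormedAddCommGroup H] [InnerProductSpace ℂ H]
    {ι : Type*} (x : ι → H) : Prop :=
  ∃ (e : HilbertBasis ι ℂ H) (T : H ≃L[ℂ] H), ∀ i, x i = T (e i)

/-- Families `x, y : ι → H` form a pair of dual Riesz bases: both are Riesz bases,
they are biorthogonal, and `∑ᵢ ⟨f, yᵢ⟩ xᵢ = f` for every `f` (inner product linear in
the first argument, conjugate-linear in the second). -/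
def IsDualRieszBasisPair {H : Type*} [NormedAddCommGroup H] [InnerProductSpace ℂ H]
    {ι : Type*} (x y : ι → H) : Prop :=
  IsRieszBasis x ∧ IsRieszBasis y ∧
    (∀ i j, ⟪x i, y j⟫ = if i = j then (1 : ℂ) else 0) ∧
    ∀ f : H, HasSum (fun i => ⟪f, y i⟫ • x i) f


private lemma parseval' {H : Type*} [NormedAddCommGroup H] [InnerProductSpace ℂ H]
    [CompleteSpace H] {ι : Type*} (e : HilbertBasis ι ℂ H) (g : H) :
    HasSum (fun i => ‖e.repr g i‖ ^ 2) (‖g‖ ^ 2) := by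
  have h2 : (0:ℝ) < (2:ℝ≥0∞).toReal := by norm_num
  have h := lp.hasSum_norm h2 (e.repr g)
  have hn : ‖e.repr g‖ = ‖g‖ := e.repr.norm_map g
  simp only [ENNReal.toReal_ofNat, hn] at h
  have : ∀ r : ℝ, r ^ (2:ℝ) = r ^ (2:ℕ) := fun r => by
    rw [← Real.rpow_natCast r 2]; norm_num
  simpa [this] using h

private lemma matrix_bounds' {q p : ℕ} (N : Matrix (Fin q) (Fin p) ℂ) (hN : N.rank = p) :
    ∃ a b : ℝ, 0 < a ∧ 0 ≤ b ∧ ∀ v : Fin p → ℂ,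
      a * ∑ k, ‖v k‖ ^ 2 ≤ ∑ j, ‖N.mulVec v j‖ ^ 2 ∧
      ∑ j, ‖N.mulVec v j‖ ^ 2 ≤ b * ∑ k, ‖v k‖ ^ 2 := by
  have hker : LinearMap.ker N.mulVecLin = ⊥ := by
    have h1 := LinearMap.finrank_range_add_finrank_ker N.mulVecLin
    rw [Matrix.rank] at hN
    rw [hN] at h1
    simp only [Module.finrank_pi, Fintype.card_fin] at h1 ⊢
    have : Module.finrank ℂ (LinearMap.ker N.mulVecLin) = 0 := by omega
    exact Submodule.finrank_eq_zero.mp this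
  set L : EuclideanSpace ℂ (Fin p) →L[ℂ] EuclideanSpace ℂ (Fin q) :=
    LinearMap.toContinuousLinearMap (Matrix.toEuclideanLin N) with hL
  have hLker : LinearMap.ker (L : EuclideanSpace ℂ (Fin p) →ₗ[ℂ] EuclideanSpace ℂ (Fin q)) = ⊥ := by
    rw [LinearMap.ker_eq_bot] at hker ⊢
    intro v w hvw
    have h := congrArg WithLp.ofLp hvw
    have := hker (a₁ := WithLp.ofLp v) (a₂ := WithLp.ofLp w) h
    exact congrArg (WithLp.toLp 2) this
  obtain ⟨K, hK0, hK⟩ := LinearMap.exists_antilipschitzWith _ hLker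
  have hK0' : (0:ℝ) < (K:ℝ) := hK0
  refine ⟨((K:ℝ)^2)⁻¹, ‖L‖^2, by positivity, by positivity, fun v => ?_⟩
  set w : EuclideanSpace ℂ (Fin p) := (WithLp.equiv 2 _).symm v with hw
  have hLw : L w = (WithLp.equiv 2 _).symm (N.mulVec v) := rfl
  have hw1 : ∑ k, ‖v k‖ ^ 2 = ‖w‖ ^ 2 := by
    rw [EuclideanSpace.norm_eq, Real.sq_sqrt (by positivity)]; simp [hw]
  have hw2 : ∑ j, ‖N.mulVec v j‖ ^ 2 = ‖L w‖ ^ 2 := by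
    rw [hLw, EuclideanSpace.norm_eq, Real.sq_sqrt (by positivity)]; simp [hw]
  have hanti : ‖w‖ ≤ (K:ℝ) * ‖L w‖ := by
    have := hK.le_mul_dist w 0
    simpa [map_zero] using this
  constructor
  · rw [hw1, hw2, inv_mul_le_iff₀ (by positivity)]
    calc ‖w‖ ^ 2 ≤ ((K:ℝ) * ‖L w‖) ^ 2 := pow_le_pow_left₀ (norm_nonneg w) hanti 2
      _ = (K:ℝ)^2 * ‖L w‖ ^ 2 := by ring
  · rw [hw1, hw2]
    calc ‖L w‖ ^ 2 ≤ (‖L‖ * ‖w‖) ^ 2 := pow_le_pow_left₀ (norm_nonneg _) (L.le_opNorm w) 2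
      _ = ‖L‖^2 * ‖w‖ ^ 2 := by ring

theorem stmt4 {H : Type*} [NormedAddCommGroup H] [InnerProductSpace ℂ H]
    [CompleteSpace H] [TopologicalSpace.SeparableSpace H]
    {p q : ℕ} (hp : 1 ≤ p) (hpq : p < q) (x y : Fin p × ℤ → H)
    (hxy : IsDualRieszBasisPair x y)
    (M : Matrix (Fin q) (Fin p) ℂ) (hM : M.rank = p)
    (z : Fin q × ℤ → H)
    (hz : ∀ j n, z (j, n) = ∑ k, M j k • x (k, n)) :
    ∃ A B : ℝ, 0 < A ∧ A ≤ B ∧ ∀ f : H,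
      (∀ j : Fin q, Summable fun n : ℤ => ‖⟪f, z (j, n)⟫‖ ^ 2) ∧
      A * ‖f‖ ^ 2 ≤ ∑ j : Fin q, ∑' n : ℤ, ‖⟪f, z (j, n)⟫‖ ^ 2 ∧
      ∑ j : Fin q, ∑' n : ℤ, ‖⟪f, z (j, n)⟫‖ ^ 2 ≤ B * ‖f‖ ^ 2 := by
  obtain ⟨⟨e, T, hT⟩, -, -, -⟩ := hxy
  set Tc : H →L[ℂ] H := (T : H →L[ℂ] H) with hTc
  set S : H →L[ℂ] H := ContinuousLinearMap.adjoint Tc with hSdef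
  set R : H →L[ℂ] H := ContinuousLinearMap.adjoint (T.symm : H →L[ℂ] H) with hRdef
  -- R ∘ S = id
  have hRS : ∀ g : H, R (S g) = g := by
    intro g
    have h1 : Tc ∘L (T.symm : H →L[ℂ] H) = ContinuousLinearMap.id ℂ H := by
      ext v; simp [hTc]
    have h2 : R ∘L S = ContinuousLinearMap.id ℂ H := by
      rw [hRdef, hSdef, ← ContinuousLinearMap.adjoint_comp, h1, ContinuousLinearMap.adjoint_id]
    calc R (S g) = (R ∘L S) g := rfl
      _ = g := by rw [h2]; rfl
  have hS_lb : ∀ g : H, ‖g‖ ≤ (‖R‖ + 1) * ‖S g‖ := by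
    intro g
    calc ‖g‖ = ‖R (S g)‖ := by rw [hRS]
      _ ≤ ‖R‖ * ‖S g‖ := R.le_opNorm _
      _ ≤ (‖R‖ + 1) * ‖S g‖ := by
          have := norm_nonneg (S g); nlinarith
  have hrepr : ∀ (f : H) (i : Fin p × ℤ), (⟪f, x i⟫ : ℂ) = e.repr (S f) i := by
    intro f i
    rw [hT i, e.repr_apply_apply, hSdef, ContinuousLinearMap.adjoint_inner_right]
    rfl
  -- matrix N = entrywise conjugate of M
  set N : Matrix (Fin q) (Fin p) ℂ := Matrix.transpose (Matrix.conjTranspose M) with hNdef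
  have hNapp : ∀ j k, N j k = (starRingEnd ℂ) (M j k) := by
    intro j k; simp [hNdef, Matrix.conjTranspose_apply]
  have hNrank : N.rank = p := by
    rw [hNdef, Matrix.rank_transpose, Matrix.rank_conjTranspose, hM]
  obtain ⟨a, b, ha, hb, hab⟩ := matrix_bounds' N hNrank
  set D : ℝ := ‖R‖ + 1 with hD
  have hD0 : 0 < D := by positivity
  refine ⟨a / D ^ 2, max (a / D ^ 2) (b * (‖S‖ + 1) ^ 2), by positivity, le_max_left _ _, ?_⟩
  intro f
  -- the coefficient family
  set c : Fin p × ℤ → ℂ := fun i => e.repr (S f) i with hc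
  have hcsum : HasSum (fun i : Fin p × ℤ => ‖c i‖ ^ 2) (‖S f‖ ^ 2) := parseval' e (S f)
  set G : ℤ → ℝ := fun n => ∑ k, ‖c (k, n)‖ ^ 2 with hG
  have hGsum : HasSum G (‖S f‖ ^ 2) := by
    have h1 : HasSum (fun i : ℤ × Fin p => ‖c (i.2, i.1)‖ ^ 2) (‖S f‖ ^ 2) := by
      have := (Equiv.hasSum_iff (Equiv.prodComm ℤ (Fin p))
        (f := fun i : Fin p × ℤ => ‖c i‖ ^ 2) (a := ‖S f‖ ^ 2)).2 hcsum
      exact this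
    exact h1.prod_fiberwise (fun n => hasSum_fintype _)
  have hGnonneg : ∀ n, 0 ≤ G n := fun n => Finset.sum_nonneg fun k _ => by positivity
  -- key identity
  have hinner : ∀ j n, (⟪f, z (j, n)⟫ : ℂ) = N.mulVec (fun k => c (k, n)) j := by
    intro j n
    rw [hz j n, sum_inner]
    simp only [Matrix.mulVec, dotProduct, inner_smul_left, hNapp]
    refine Finset.sum_congr rfl fun k _ => ?_
    rw [hrepr f (k, n)]
  -- pointwise matrix bounds
  set W : ℤ → ℝ := fun n => ∑ j, ‖N.mulVec (fun k => c (k, n)) j‖ ^ 2 with hW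
  have hWbound : ∀ n, a * G n ≤ W n ∧ W n ≤ b * G n := fun n => hab _
  have hWnonneg : ∀ n, 0 ≤ W n := fun n => Finset.sum_nonneg fun j _ => by positivity
  have hWsummable : Summable W :=
    Summable.of_nonneg_of_le hWnonneg (fun n => (hWbound n).2) (hGsum.summable.mul_left b)
  -- per-j summability
  have hjsummable : ∀ j : Fin q, Summable fun n : ℤ => ‖(⟪f, z (j, n)⟫ : ℂ)‖ ^ 2 := by
    intro j
    refine Summable.of_nonneg_of_le (fun n => by positivity) (fun n => ?_) hWsummable
    rw [hinner j n]
    exact Finset.single_le_sum (f := fun j' => ‖N.mulVec (fun k => c (k, n)) j'‖ ^ 2)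
      (fun j' _ => by positivity) (Finset.mem_univ j)
  have hswap : ∑ j : Fin q, ∑' n : ℤ, ‖(⟪f, z (j, n)⟫ : ℂ)‖ ^ 2 = ∑' n : ℤ, W n := by
    rw [← Summable.tsum_finsetSum (fun j _ => hjsummable j)]
    congr 1; funext n
    exact Finset.sum_congr rfl fun j _ => by rw [hinner j n]
  refine ⟨hjsummable, ?_, ?_⟩
  · rw [hswap]
    have h1 : ‖f‖ ^ 2 ≤ D ^ 2 * ‖S f‖ ^ 2 := by
      calc ‖f‖ ^ 2 ≤ (D * ‖S f‖) ^ 2 :=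
            pow_le_pow_left₀ (norm_nonneg f) (hS_lb f) 2
        _ = D ^ 2 * ‖S f‖ ^ 2 := by ring
    calc a / D ^ 2 * ‖f‖ ^ 2 ≤ a / D ^ 2 * (D ^ 2 * ‖S f‖ ^ 2) :=
          mul_le_mul_of_nonneg_left h1 (by positivity)
      _ = a * ‖S f‖ ^ 2 := by field_simp
      _ = a * ∑' n, G n := by rw [hGsum.tsum_eq]
      _ = ∑' n, a * G n := by rw [← tsum_mul_left]
      _ ≤ ∑' n, W n := Summable.tsum_le_tsum (fun n => (hWbound n).1)
          (hGsum.summable.mul_left a) hWsummable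
  · rw [hswap]
    have h1 : ‖S f‖ ^ 2 ≤ (‖S‖ + 1) ^ 2 * ‖f‖ ^ 2 := by
      have h2 : ‖S f‖ ≤ (‖S‖ + 1) * ‖f‖ := by
        calc ‖S f‖ ≤ ‖S‖ * ‖f‖ := S.le_opNorm f
          _ ≤ (‖S‖ + 1) * ‖f‖ := by
              have := norm_nonneg f; nlinarith
      calc ‖S f‖ ^ 2 ≤ ((‖S‖ + 1) * ‖f‖) ^ 2 :=
            pow_le_pow_left₀ (norm_nonneg _) h2 2
        _ = (‖S‖ + 1) ^ 2 * ‖f‖ ^ 2 := by ring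
    calc ∑' n, W n ≤ ∑' n, b * G n := Summable.tsum_le_tsum (fun n => (hWbound n).2)
          hWsummable (hGsum.summable.mul_left b)
      _ = b * ‖S f‖ ^ 2 := by rw [tsum_mul_left, hGsum.tsum_eq]
      _ ≤ b * ((‖S‖ + 1) ^ 2 * ‖f‖ ^ 2) := mul_le_mul_of_nonneg_left h1 hb
      _ = b * (‖S‖ + 1) ^ 2 * ‖f‖ ^ 2 := by ring
      _ ≤ max (a / D ^ 2) (b * (‖S‖ + 1) ^ 2) * ‖f‖ ^ 2 :=
          mul_le_mul_of_nonneg_right (le_max_right _ _) (by positivity)
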